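/- Let f : M₁ → M₂ and g : M₂ → M₁ be continuous maps of topological spaces, let h₁ : M₁ × [0,1] → M₁ be a homotopy from g∘f to the identity of M₁, let h₂ : M₂ × [0,1] → M₂ be a homotopy from f∘g to the identity of M₂, and let K : M₁ × [0,1] × [0,1] → M₂ be a homotopy, relative to M₁ × {0,1}, from (m,t) ↦ f(h₁(m,t)) to (m,t) ↦ h₂(f(m),t); that is, K(m,t,0) = f(h₁(m,t)), K(m,t,1) = h₂(f(m),t) for all (m,t), and K(m,0,u) and K(m,1,u) are independent of u. Then the formula G(m,γ,s) = (g(f(m)), g(γ(s)), f∘g∘γ, s) defines a continuous map G : Λ₁,₂ × [0,1] → W₁₁,₂ (well-defined since f(g(f(m))) = (f∘g∘γ)(0) and f(g(γ(s))) = (f∘g∘γ)(s)), and G is a two-sided homotopy inverse of f′₂: both f′₂∘G and G∘f′₂ are homotopic to the respective identity maps. -/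

import Mathlib

/-!
Statement 2: given `f : M₁ → M₂`, `g : M₂ → M₁`, homotopies `h₁ : g∘f ≃ id`,
`h₂ : f∘g ≃ id` and a homotopy `K`, relative to `M₁ × {0,1}`, from
`(m,t) ↦ f(h₁(m,t))` to `(m,t) ↦ h₂(f(m),t)`, the formula
`G(m,γ,s) = (g(f(m)), g(γ(s)), f∘g∘γ, s)` defines a continuous map
`G : Λ₁,₂ × [0,1] → W₁₁,₂` which is a two-sided homotopy inverse of `f′₂`.
-/

open unitInterval

/-- The free loop space of `X`. -/
abbrev LoopSp (X : Type) [TopologicalSpace X] : Type :=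
  {γ : C(unitInterval, X) // γ 0 = γ 1}

variable {M₁ M₂ : Type} [TopologicalSpace M₁] [TopologicalSpace M₂]

/-- `Λ₁,₂ = {(m,γ) ∈ M₁ × ΛM₂ : f(m) = γ(0)}`. -/
abbrev Lam12 (f : C(M₁, M₂)) : Type :=
  {p : M₁ × LoopSp M₂ // f p.1 = p.2.1 0}

/-- `W₁₁,₂ = {(m,m′,γ,s) ∈ M₁ × M₁ × ΛM₂ × [0,1] : f(m) = γ(0), f(m′) = γ(s)}`. -/
abbrev W112 (f : C(M₁, M₂)) : Type :=
  {q : M₁ × M₁ × LoopSp M₂ × unitInterval // f q.1 = q.2.2.1.1 0 ∧ f q.2.1 = q.2.2.1.1 q.2.2.2}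

/-- The map `f′₂ : W₁₁,₂ → Λ₁,₂ × [0,1]`, `(m,m′,γ,s) ↦ (m,γ,s)`. -/
def fPrime2 (f : C(M₁, M₂)) : C(W112 f, Lam12 f × unitInterval) where
  toFun q := (⟨(q.1.1, q.1.2.2.1), q.2.1⟩, q.1.2.2.2)
  continuous_toFun := by
    apply Continuous.prodMk
    · exact Continuous.subtype_mk
        ((continuous_subtype_val.fst).prodMk continuous_subtype_val.snd.snd.fst) _
    · exact continuous_subtype_val.snd.snd.snd

/-- The loop `u ↦ f(g(γ(u)))`. -/
def fgLoop (f : C(M₁, M₂)) (g : C(M₂, M₁)) (γ : LoopSp M₂) : LoopSp M₂ :=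
  ⟨f.comp (g.comp γ.1), by simp only [ContinuousMap.comp_apply, γ.2]⟩


/- ===== auxiliary material ===== -/

noncomputable def eI (x : ℝ) : I := Set.projIcc 0 1 zero_le_one x

lemma continuous_eI : Continuous eI := continuous_projIcc (h := zero_le_one)

@[simp] lemma eI_coe (t : I) : eI (t : ℝ) = t := Set.projIcc_val zero_le_one t

lemma eI_of_mem {x : ℝ} (h0 : 0 ≤ x) (h1 : x ≤ 1) : (eI x : ℝ) = x := by
  simp [eI, Set.projIcc_of_mem zero_le_one ⟨h0, h1⟩]

@[simp] lemma eI_zero : eI 0 = 0 := Subtype.ext (by rw [eI_of_mem le_rfl zero_le_one]; rfl)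
@[simp] lemma eI_one : eI 1 = 1 := Subtype.ext (by rw [eI_of_mem zero_le_one le_rfl]; rfl)

/-- The reparametrisation family. -/
noncomputable def rho (s τ u : ℝ) : ℝ :=
  min 1 (max 0 (max (min ((1+τ)*(u - τ/8)) s) ((1+τ)*(u - τ/4))))

/-- Centre of the middle plateau. -/
noncomputable def sMid (s τ : ℝ) : ℝ := s/(1+τ) + 3*τ/16

lemma continuous_rho : Continuous fun x : ℝ × ℝ × ℝ => rho x.1 x.2.1 x.2.2 := by
  unfold rho; fun_prop

lemma rho_mem {s τ u : ℝ} : rho s τ u ∈ Set.Icc (0:ℝ) 1 :=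
  ⟨le_min zero_le_one (le_max_left _ _), min_le_left _ _⟩

lemma rho_tau_zero {s u : ℝ} (h0 : 0 ≤ u) (h1 : u ≤ 1) : rho s 0 u = u := by
  unfold rho
  rw [show (1+(0:ℝ))*(u - 0/8) = u by ring, show (1+(0:ℝ))*(u - 0/4) = u by ring,
    max_eq_right (min_le_left u s), max_eq_right h0, min_eq_right h1]

lemma rho_zero {s τ : ℝ} (hs : 0 ≤ s) (ht : 0 ≤ τ) : rho s τ 0 = 0 := by
  have h1 : (1+τ)*(0 - τ/8) ≤ 0 := by nlinarith
  have h2 : (1+τ)*(0 - τ/4) ≤ 0 := by nlinarith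
  unfold rho
  rw [max_eq_left (max_le ((min_le_left _ _).trans h1) h2), min_eq_right zero_le_one]

lemma rho_one {s τ : ℝ} (ht0 : 0 ≤ τ) (ht1 : τ ≤ 1) : rho s τ 1 = 1 := by
  have h2 : (1:ℝ) ≤ (1+τ)*(1 - τ/4) := by nlinarith
  unfold rho
  rw [min_eq_left (le_max_of_le_right (le_max_of_le_right h2))]

lemma rho_sMid {s τ : ℝ} (hs0 : 0 ≤ s) (hs1 : s ≤ 1) (ht0 : 0 ≤ τ) (ht1 : τ ≤ 1) :
    rho s τ (sMid s τ) = s := by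
  have hd : (0:ℝ) < 1 + τ := by linarith
  have hA : s ≤ (1+τ)*(sMid s τ - τ/8) := by
    unfold sMid
    rw [mul_sub, mul_add, mul_div_cancel₀ _ hd.ne']
    nlinarith
  have hB : (1+τ)*(sMid s τ - τ/4) ≤ s := by
    unfold sMid
    rw [mul_sub, mul_add, mul_div_cancel₀ _ hd.ne']
    nlinarith
  unfold rho
  rw [min_eq_right hA, max_eq_left hB, max_eq_right hs0, min_eq_right hs1]

lemma sMid_mem {s τ : ℝ} (hs0 : 0 ≤ s) (hs1 : s ≤ 1) (ht0 : 0 ≤ τ) (ht1 : τ ≤ 1) :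
    0 ≤ sMid s τ ∧ sMid s τ ≤ 1 := by
  have hd : (0:ℝ) < 1 + τ := by linarith
  constructor
  · unfold sMid; positivity
  · unfold sMid
    rw [div_add' _ _ _ hd.ne', div_le_one hd]
    nlinarith

lemma sMid_tau_zero {s : ℝ} : sMid s 0 = s := by norm_num [sMid]

lemma rho_collar0 {s u : ℝ} (hs : 0 ≤ s) (hu : u ≤ 1/16) : rho s 1 u = 0 := by
  have h1 : (1+1)*(u - 1/8) ≤ 0 := by linarith
  have h2 : (1+1)*(u - 1/4) ≤ 0 := by linarith
  unfold rho
  rw [max_eq_left (max_le ((min_le_left _ _).trans h1) h2), min_eq_right zero_le_one]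

lemma rho_collar1 {s u : ℝ} (hu : 15/16 ≤ u) : rho s 1 u = 1 := by
  have h2 : (1:ℝ) ≤ (1+1)*(u - 1/4) := by linarith
  unfold rho
  rw [min_eq_left (le_max_of_le_right (le_max_of_le_right h2))]

lemma rho_spike {s u : ℝ} (hs0 : 0 ≤ s) (hs1 : s ≤ 1) (hu : |u - (s/2 + 3/16)| ≤ 1/16) :
    rho s 1 u = s := by
  rw [abs_le] at hu
  have hA : s ≤ (1+1)*(u - 1/8) := by linarith [hu.1]
  have hB : (1+1)*(u - 1/4) ≤ s := by linarith [hu.2]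
  unfold rho
  rw [min_eq_right hA, max_eq_left hB, max_eq_right hs0, min_eq_right hs1]

lemma sMid_one {s : ℝ} : sMid s 1 = s/2 + 3/16 := by unfold sMid; norm_num

open unitInterval ContinuousMap

variable {M₁ M₂ : Type} [TopologicalSpace M₁] [TopologicalSpace M₂]

/-- Data space: (m, m', γ, s) with the loop relations. -/
def DD (f : C(M₁,M₂)) : Type _ :=
  {d : M₁ × M₁ × C(I,M₂) × I //
    f d.1 = d.2.2.1 0 ∧ f d.2.1 = d.2.2.1 d.2.2.2 ∧ d.2.2.1 0 = d.2.2.1 1}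

variable {f : C(M₁, M₂)} {g : C(M₂, M₁)}

instance : TopologicalSpace (DD f) := by unfold DD; infer_instance

/-- The square homotopy function. -/
noncomputable def Phi (f : C(M₁,M₂)) (h₂ : C(M₂ × I, M₂)) (K : C(M₁ × I × I, M₂)) :
    (DD f × I) × I → M₂ := fun x =>
  if (x.2 : ℝ) ≤ 1/16 then K (x.1.1.1.1, x.1.2, eI (16*(x.2:ℝ)))
  else if (15/16:ℝ) ≤ (x.2:ℝ) then K (x.1.1.1.1, x.1.2, eI (16*(1-(x.2:ℝ))))
  else if |(x.2:ℝ) - ((x.1.1.1.2.2.2:ℝ)/2 + 3/16)| ≤ 1/16 then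
    K (x.1.1.1.2.1, x.1.2, eI (16*|(x.2:ℝ) - ((x.1.1.1.2.2.2:ℝ)/2 + 3/16)|))
  else h₂ (x.1.1.1.2.2.1 (eI (rho (x.1.1.1.2.2.2:ℝ) 1 (x.2:ℝ))), x.1.2)

section PhiLemmas

variable (h₁ : C(M₁ × I, M₁)) (h₂ : C(M₂ × I, M₂)) (K : C(M₁ × I × I, M₂))

lemma Phi_zero (hK0 : ∀ m t, K (m, t, 0) = f (h₁ (m, t))) (d : DD f) (t : I) :
    Phi f h₂ K ((d, t), 0) = f (h₁ (d.1.1, t)) := by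
  unfold Phi
  rw [if_pos (by norm_num : ((0:I):ℝ) ≤ 1/16)]
  norm_num [hK0]

lemma Phi_one (hK0 : ∀ m t, K (m, t, 0) = f (h₁ (m, t))) (d : DD f) (t : I) :
    Phi f h₂ K ((d, t), 1) = f (h₁ (d.1.1, t)) := by
  unfold Phi
  rw [if_neg (by norm_num : ¬((1:I):ℝ) ≤ 1/16), if_pos (by norm_num : (15/16:ℝ) ≤ ((1:I):ℝ))]
  norm_num [hK0]

lemma Phi_spike (hK0 : ∀ m t, K (m, t, 0) = f (h₁ (m, t))) (d : DD f) (t : I) :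
    Phi f h₂ K ((d, t), eI ((d.1.2.2.2:ℝ)/2 + 3/16)) = f (h₁ (d.1.2.1, t)) := by
  obtain ⟨⟨m, m', γ, s⟩, hm, hm', hcl⟩ := d
  have hs0 : (0:ℝ) ≤ s := s.2.1
  have hs1 : (s:ℝ) ≤ 1 := s.2.2
  have hu : (eI ((s:ℝ)/2 + 3/16) : ℝ) = (s:ℝ)/2 + 3/16 :=
    eI_of_mem (by linarith) (by linarith)
  unfold Phi
  dsimp only
  rw [hu, if_neg (by intro h; linarith), if_neg (by intro h; linarith),
    if_pos (by rw [sub_self, abs_zero]; norm_num)]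
  rw [sub_self, abs_zero, mul_zero, eI_zero, hK0]

lemma Phi_t_one (hh₂1 : ∀ m, h₂ (m, 1) = m)
    (hK1 : ∀ m t, K (m, t, 1) = h₂ (f m, t))
    (hKrel1 : ∀ m u u', K (m, 1, u) = K (m, 1, u'))
    (d : DD f) (u : I) :
    Phi f h₂ K ((d, 1), u) = d.1.2.2.1 (eI (rho (d.1.2.2.2:ℝ) 1 (u:ℝ))) := by
  obtain ⟨⟨m, m', γ, s⟩, hm, hm', hcl⟩ := d
  dsimp only at hm hm' hcl ⊢
  have hs0 : (0:ℝ) ≤ s := s.2.1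
  have hs1 : (s:ℝ) ≤ 1 := s.2.2
  have key : ∀ m₀ (x : I), K (m₀, 1, x) = f m₀ := fun m₀ x => by
    rw [hKrel1 m₀ x 1, hK1, hh₂1]
  unfold Phi
  dsimp only
  split_ifs with hc1 hc2 hc3
  · rw [key, rho_collar0 hs0 hc1, eI_zero, ← hm]
  · rw [key, rho_collar1 hc2, eI_one, ← hcl, ← hm]
  · rw [key, rho_spike hs0 hs1 hc3, eI_coe, ← hm']
  · simp [hh₂1]

lemma Phi_t_zero (hh₂0 : ∀ m, h₂ (m, 0) = f (g m))
    (hK1 : ∀ m t, K (m, t, 1) = h₂ (f m, t))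
    (hKrel0 : ∀ m u u', K (m, 0, u) = K (m, 0, u'))
    (d : DD f) (u : I) :
    Phi f h₂ K ((d, 0), u) = f (g (d.1.2.2.1 (eI (rho (d.1.2.2.2:ℝ) 1 (u:ℝ))))) := by
  obtain ⟨⟨m, m', γ, s⟩, hm, hm', hcl⟩ := d
  dsimp only at hm hm' hcl ⊢
  have hs0 : (0:ℝ) ≤ s := s.2.1
  have hs1 : (s:ℝ) ≤ 1 := s.2.2
  have key : ∀ m₀ (x : I), K (m₀, 0, x) = f (g (f m₀)) := fun m₀ x => by
    rw [hKrel0 m₀ x 1, hK1, hh₂0]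
  unfold Phi
  dsimp only
  split_ifs with hc1 hc2 hc3
  · rw [key, rho_collar0 hs0 hc1, eI_zero, ← hm]
  · rw [key, rho_collar1 hc2, eI_one, ← hcl, ← hm]
  · rw [key, rho_spike hs0 hs1 hc3, eI_coe, ← hm']
  · simp [hh₂0]

end PhiLemmas

section PhiCont

variable (h₂ : C(M₂ × I, M₂)) (K : C(M₁ × I × I, M₂))

lemma continuous_Phi (hK1 : ∀ m t, K (m, t, 1) = h₂ (f m, t)) :
    Continuous (Phi f h₂ K) := by
  have hd : Continuous fun x : (DD f × I) × I => (x.1.1.1 : M₁ × M₁ × C(I,M₂) × I) :=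
    continuous_subtype_val.comp (continuous_fst.comp continuous_fst)
  have hm : Continuous fun x : (DD f × I) × I => x.1.1.1.1 := hd.fst
  have hm' : Continuous fun x : (DD f × I) × I => x.1.1.1.2.1 := hd.snd.fst
  have hγ : Continuous fun x : (DD f × I) × I => x.1.1.1.2.2.1 := hd.snd.snd.fst
  have hsI : Continuous fun x : (DD f × I) × I => x.1.1.1.2.2.2 := hd.snd.snd.snd
  have hs : Continuous fun x : (DD f × I) × I => (x.1.1.1.2.2.2 : ℝ) :=
    continuous_subtype_val.comp hsI
  have ht : Continuous fun x : (DD f × I) × I => x.1.2 := continuous_snd.comp continuous_fst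
  have hu : Continuous fun x : (DD f × I) × I => (x.2 : ℝ) :=
    continuous_subtype_val.comp continuous_snd
  -- branch continuities
  have hb1 : Continuous fun x : (DD f × I) × I => K (x.1.1.1.1, x.1.2, eI (16*(x.2:ℝ))) :=
    K.continuous.comp (hm.prodMk (ht.prodMk (continuous_eI.comp (continuous_const.mul hu))))
  have hb2 : Continuous fun x : (DD f × I) × I => K (x.1.1.1.1, x.1.2, eI (16*(1-(x.2:ℝ)))) :=
    K.continuous.comp (hm.prodMk (ht.prodMk (continuous_eI.comp
      (continuous_const.mul (continuous_const.sub hu)))))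
  have habs : Continuous fun x : (DD f × I) × I =>
      |(x.2:ℝ) - ((x.1.1.1.2.2.2:ℝ)/2 + 3/16)| :=
    (hu.sub ((hs.div_const 2).add continuous_const)).abs
  have hb3 : Continuous fun x : (DD f × I) × I =>
      K (x.1.1.1.2.1, x.1.2, eI (16*|(x.2:ℝ) - ((x.1.1.1.2.2.2:ℝ)/2 + 3/16)|)) :=
    K.continuous.comp (hm'.prodMk (ht.prodMk (continuous_eI.comp
      (continuous_const.mul habs))))
  have hb4 : Continuous fun x : (DD f × I) × I =>
      h₂ (x.1.1.1.2.2.1 (eI (rho (x.1.1.1.2.2.2:ℝ) 1 (x.2:ℝ))), x.1.2) := by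
    apply h₂.continuous.comp
    apply Continuous.prodMk _ ht
    exact ContinuousEval.continuous_eval.comp
      (hγ.prodMk (continuous_eI.comp
        (continuous_rho.comp (hs.prodMk (continuous_const.prodMk hu)))))
  -- innermost if: spike vs base
  have hin : Continuous fun x : (DD f × I) × I =>
      if |(x.2:ℝ) - ((x.1.1.1.2.2.2:ℝ)/2 + 3/16)| ≤ 1/16 then
        K (x.1.1.1.2.1, x.1.2, eI (16*|(x.2:ℝ) - ((x.1.1.1.2.2.2:ℝ)/2 + 3/16)|))
      else h₂ (x.1.1.1.2.2.1 (eI (rho (x.1.1.1.2.2.2:ℝ) 1 (x.2:ℝ))), x.1.2) := by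
    apply hb3.if_le hb4 habs continuous_const
    rintro ⟨⟨⟨⟨m, m', γ, s⟩, hm0, hm'0, hcl0⟩, t⟩, u⟩ hx
    dsimp only at hx hm0 hm'0 hcl0 ⊢
    have hs0 : (0:ℝ) ≤ s := s.2.1
    have hs1 : (s:ℝ) ≤ 1 := s.2.2
    rw [hx, rho_spike hs0 hs1 hx.le, eI_coe,
      show (16:ℝ)*(1/16) = 1 by norm_num, eI_one, hK1, hm'0]
  -- middle if: 1-collar vs inner
  have hmid : Continuous fun x : (DD f × I) × I =>
      if (15/16:ℝ) ≤ (x.2:ℝ) then K (x.1.1.1.1, x.1.2, eI (16*(1-(x.2:ℝ))))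
      else if |(x.2:ℝ) - ((x.1.1.1.2.2.2:ℝ)/2 + 3/16)| ≤ 1/16 then
        K (x.1.1.1.2.1, x.1.2, eI (16*|(x.2:ℝ) - ((x.1.1.1.2.2.2:ℝ)/2 + 3/16)|))
      else h₂ (x.1.1.1.2.2.1 (eI (rho (x.1.1.1.2.2.2:ℝ) 1 (x.2:ℝ))), x.1.2) := by
    apply hb2.if_le hin continuous_const hu
    rintro ⟨⟨⟨⟨m, m', γ, s⟩, hm0, hm'0, hcl0⟩, t⟩, u⟩ hx
    dsimp only at hx hm0 hm'0 hcl0 ⊢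
    have hs0 : (0:ℝ) ≤ s := s.2.1
    have hs1 : (s:ℝ) ≤ 1 := s.2.2
    rw [← hx, if_neg (by intro h; rw [abs_le] at h; linarith [h.2]),
      rho_collar1 le_rfl, eI_one, show (16:ℝ)*(1-15/16) = 1 by norm_num, eI_one,
      hK1, hm0, hcl0]
  -- outer if
  show Continuous fun x : (DD f × I) × I =>
      if (x.2:ℝ) ≤ 1/16 then K (x.1.1.1.1, x.1.2, eI (16*(x.2:ℝ)))
      else if (15/16:ℝ) ≤ (x.2:ℝ) then K (x.1.1.1.1, x.1.2, eI (16*(1-(x.2:ℝ))))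
      else if |(x.2:ℝ) - ((x.1.1.1.2.2.2:ℝ)/2 + 3/16)| ≤ 1/16 then
        K (x.1.1.1.2.1, x.1.2, eI (16*|(x.2:ℝ) - ((x.1.1.1.2.2.2:ℝ)/2 + 3/16)|))
      else h₂ (x.1.1.1.2.2.1 (eI (rho (x.1.1.1.2.2.2:ℝ) 1 (x.2:ℝ))), x.1.2)
  apply hb1.if_le hmid hu continuous_const
  rintro ⟨⟨⟨⟨m, m', γ, s⟩, hm0, hm'0, hcl0⟩, t⟩, u⟩ hx
  dsimp only at hx hm0 hm'0 hcl0 ⊢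
  have hs0 : (0:ℝ) ≤ s := s.2.1
  rw [hx, if_neg (by norm_num),
    if_neg (by intro h; rw [abs_le] at h; linarith [h.1]),
    rho_collar0 hs0 le_rfl, eI_zero, show (16:ℝ)*(1/16) = 1 by norm_num, eI_one,
    hK1, hm0]

end PhiCont

section MainDefs

variable {M₁ M₂ : Type} [TopologicalSpace M₁] [TopologicalSpace M₂]
variable (f : C(M₁, M₂)) (g : C(M₂, M₁))

/-- Repackage a point of `W112` as data for the square function. -/
def dOfW : W112 f → DD f := fun w =>
  ⟨(w.1.1, w.1.2.1, w.1.2.2.1.1, w.1.2.2.2), w.2.1, w.2.2, w.1.2.2.1.2⟩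

lemma continuous_dOfW : Continuous (dOfW f) := by
  apply Continuous.subtype_mk
  have hv : Continuous fun w : W112 f => (w : M₁ × M₁ × LoopSp M₂ × I) := continuous_subtype_val
  exact hv.fst.prodMk (hv.snd.fst.prodMk
    ((continuous_subtype_val.comp hv.snd.snd.fst).prodMk hv.snd.snd.snd))

/-- Repackage a point of `Lam12` as data for the square function. -/
def dOfL : Lam12 f → DD f := fun p =>
  ⟨(p.1.1, p.1.1, p.1.2.1, 0), p.2, p.2, p.1.2.2⟩

lemma continuous_dOfL : Continuous (dOfL f) := by
  apply Continuous.subtype_mk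
  have hv : Continuous fun p : Lam12 f => (p : M₁ × LoopSp M₂) := continuous_subtype_val
  exact hv.fst.prodMk (hv.fst.prodMk
    ((continuous_subtype_val.comp hv.snd).prodMk continuous_const))

/-- The reparametrisation square, as a continuous map. -/
noncomputable def bigA : C((DD f × I) × I, M₂) where
  toFun x := x.1.1.1.2.2.1 (eI (rho (x.1.1.1.2.2.2:ℝ) (x.1.2:ℝ) (x.2:ℝ)))
  continuous_toFun := by
    have hd : Continuous fun x : (DD f × I) × I => (x.1.1.1 : M₁ × M₁ × C(I,M₂) × I) :=
      continuous_subtype_val.comp (continuous_fst.comp continuous_fst)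
    exact ContinuousEval.continuous_eval.comp (hd.snd.snd.fst.prodMk
      (continuous_eI.comp (continuous_rho.comp
        ((continuous_subtype_val.comp hd.snd.snd.snd).prodMk
          ((continuous_subtype_val.comp (continuous_snd.comp continuous_fst)).prodMk
            (continuous_subtype_val.comp continuous_snd))))))

/-- The reparametrised loop. -/
noncomputable def loopA (d : DD f) (τ : I) : LoopSp M₂ :=
  ⟨(bigA f).curry (d, τ), by
    show d.1.2.2.1 (eI (rho (d.1.2.2.2:ℝ) (τ:ℝ) ((0:I):ℝ)))
        = d.1.2.2.1 (eI (rho (d.1.2.2.2:ℝ) (τ:ℝ) ((1:I):ℝ)))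
    rw [show ((0:I):ℝ) = 0 from rfl, show ((1:I):ℝ) = 1 from rfl,
      rho_zero d.1.2.2.2.2.1 τ.2.1, rho_one τ.2.1 τ.2.2, eI_zero, eI_one, d.2.2.2]⟩

lemma continuous_loopA : Continuous fun x : DD f × I => loopA f x.1 x.2 :=
  Continuous.subtype_mk (map_continuous (bigA f).curry) _

section WithHomotopies

variable (h₁ : C(M₁ × I, M₁)) (h₂ : C(M₂ × I, M₂)) (K : C(M₁ × I × I, M₂))

/-- The square function as a continuous map. -/
noncomputable def PhiC (hK1 : ∀ m t, K (m, t, 1) = h₂ (f m, t)) : C((DD f × I) × I, M₂) :=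
  ⟨Phi f h₂ K, continuous_Phi h₂ K hK1⟩

/-- The corrected loop at time `t` of the main homotopy. -/
noncomputable def loopB (hK0 : ∀ m t, K (m, t, 0) = f (h₁ (m, t)))
    (hK1 : ∀ m t, K (m, t, 1) = h₂ (f m, t)) (d : DD f) (t : I) : LoopSp M₂ :=
  ⟨(PhiC f h₂ K hK1).curry (d, t), by
    show Phi f h₂ K ((d,t),0) = Phi f h₂ K ((d,t),1)
    rw [Phi_zero h₁ h₂ K hK0, Phi_one h₁ h₂ K hK0]⟩

lemma continuous_loopB (hK0 : ∀ m t, K (m, t, 0) = f (h₁ (m, t)))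
    (hK1 : ∀ m t, K (m, t, 1) = h₂ (f m, t)) :
    Continuous fun x : DD f × I => loopB f h₁ h₂ K hK0 hK1 x.1 x.2 :=
  Continuous.subtype_mk (map_continuous (PhiC f h₂ K hK1).curry) _

end WithHomotopies

/-- The candidate homotopy inverse `G`. -/
def Gmap : C(Lam12 f × I, W112 f) where
  toFun p := ⟨(g (f p.1.1.1), g (p.1.1.2.1 p.2), fgLoop f g p.1.1.2, p.2),
    by show f (g (f p.1.1.1)) = f (g (p.1.1.2.1 0)); rw [p.1.2],
    rfl⟩
  continuous_toFun := by
    have hb : Continuous fun p : Lam12 f × I => (p.1 : M₁ × LoopSp M₂) :=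
      continuous_subtype_val.comp continuous_fst
    apply Continuous.subtype_mk
    refine (g.continuous.comp (f.continuous.comp hb.fst)).prodMk (Continuous.prodMk ?_ (Continuous.prodMk ?_ continuous_snd))
    · exact g.continuous.comp (ContinuousEval.continuous_eval.comp
        ((continuous_subtype_val.comp hb.snd).prodMk continuous_snd))
    · exact Continuous.subtype_mk ((ContinuousMap.continuous_postcomp f).comp
        ((ContinuousMap.continuous_postcomp g).comp (continuous_subtype_val.comp hb.snd))) _

section Maps

variable {M₁ M₂ : Type} [TopologicalSpace M₁] [TopologicalSpace M₂]
variable (f : C(M₁, M₂)) (g : C(M₂, M₁))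

/-- Extensionality for `W112`. -/
lemma W112_ext {w₁ w₂ : W112 f} (e1 : w₁.1.1 = w₂.1.1) (e2 : w₁.1.2.1 = w₂.1.2.1)
    (e3 : ∀ u, w₁.1.2.2.1.1 u = w₂.1.2.2.1.1 u) (e4 : w₁.1.2.2.2 = w₂.1.2.2.2) : w₁ = w₂ :=
  Subtype.ext (Prod.ext e1 (Prod.ext e2
    (Prod.ext (Subtype.ext (ContinuousMap.ext e3)) e4)))

/-- Extensionality for `Lam12 × I`. -/
lemma LamI_ext {p₁ p₂ : Lam12 f × I} (e1 : p₁.1.1.1 = p₂.1.1.1)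
    (e3 : ∀ u, p₁.1.1.2.1 u = p₂.1.1.2.1 u) (e4 : p₁.2 = p₂.2) : p₁ = p₂ :=
  Prod.ext (Subtype.ext (Prod.ext e1 (Subtype.ext (ContinuousMap.ext e3)))) e4

/-- The end map of the reparametrisation homotopy on `W112`. -/
noncomputable def RW : C(W112 f, W112 f) where
  toFun w := ⟨(w.1.1, w.1.2.1, loopA f (dOfW f w) 1, eI (sMid ((w.1.2.2.2 : I):ℝ) 1)),
    by
      show f w.1.1 = w.1.2.2.1.1 (eI (rho ((w.1.2.2.2:I):ℝ) ((1:I):ℝ) ((0:I):ℝ)))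
      rw [show ((0:I):ℝ) = 0 from rfl, show ((1:I):ℝ) = 1 from rfl,
        rho_zero w.1.2.2.2.2.1 zero_le_one, eI_zero, ← w.2.1],
    by
      have hs0 : (0:ℝ) ≤ w.1.2.2.2 := w.1.2.2.2.2.1
      have hs1 : ((w.1.2.2.2:I):ℝ) ≤ 1 := w.1.2.2.2.2.2
      have hm := sMid_mem hs0 hs1 (zero_le_one (α := ℝ)) le_rfl
      show f w.1.2.1 = w.1.2.2.1.1
        (eI (rho ((w.1.2.2.2:I):ℝ) ((1:I):ℝ) ((eI (sMid ((w.1.2.2.2:I):ℝ) 1) : I):ℝ)))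
      rw [show ((1:I):ℝ) = 1 from rfl, eI_of_mem hm.1 hm.2,
        rho_sMid hs0 hs1 zero_le_one le_rfl, eI_coe, ← w.2.2]⟩
  continuous_toFun := by
    have hv : Continuous fun w : W112 f => (w : M₁ × M₁ × LoopSp M₂ × I) := continuous_subtype_val
    apply Continuous.subtype_mk
    refine hv.fst.prodMk (hv.snd.fst.prodMk (Continuous.prodMk ?_ ?_))
    · exact (continuous_loopA f).comp ((continuous_dOfW f).prodMk continuous_const)
    · exact continuous_eI.comp ((((continuous_subtype_val.comp hv.snd.snd.snd).div_const _).add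
        continuous_const))

/-- Stage A homotopy on `W112`: from the identity to `RW`. -/
noncomputable def HWA : (ContinuousMap.id (W112 f)).Homotopy (RW f) where
  toFun p := ⟨(p.2.1.1, p.2.1.2.1, loopA f (dOfW f p.2) p.1,
      eI (sMid ((p.2.1.2.2.2 : I):ℝ) (p.1:ℝ))),
    by
      show f p.2.1.1 = p.2.1.2.2.1.1 (eI (rho ((p.2.1.2.2.2:I):ℝ) ((p.1:I):ℝ) ((0:I):ℝ)))
      rw [show ((0:I):ℝ) = 0 from rfl,
        rho_zero p.2.1.2.2.2.2.1 p.1.2.1, eI_zero, ← p.2.2.1],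
    by
      have hs0 : (0:ℝ) ≤ p.2.1.2.2.2 := p.2.1.2.2.2.2.1
      have hs1 : ((p.2.1.2.2.2:I):ℝ) ≤ 1 := p.2.1.2.2.2.2.2
      have hm := sMid_mem hs0 hs1 p.1.2.1 p.1.2.2
      show f p.2.1.2.1 = p.2.1.2.2.1.1
        (eI (rho ((p.2.1.2.2.2:I):ℝ) ((p.1:I):ℝ) ((eI (sMid ((p.2.1.2.2.2:I):ℝ) (p.1:ℝ)) : I):ℝ)))
      rw [eI_of_mem hm.1 hm.2, rho_sMid hs0 hs1 p.1.2.1 p.1.2.2, eI_coe, ← p.2.2.2]⟩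
  continuous_toFun := by
    have hv : Continuous fun p : I × W112 f => (p.2 : M₁ × M₁ × LoopSp M₂ × I) :=
      continuous_subtype_val.comp continuous_snd
    apply Continuous.subtype_mk
    refine hv.fst.prodMk (hv.snd.fst.prodMk (Continuous.prodMk ?_ ?_))
    · exact (continuous_loopA f).comp
        (((continuous_dOfW f).comp continuous_snd).prodMk continuous_fst)
    · refine continuous_eI.comp (Continuous.add (Continuous.div ?_ ?_ ?_) ?_)
      · exact continuous_subtype_val.comp hv.snd.snd.snd
      · exact (continuous_const.add (continuous_subtype_val.comp continuous_fst))
      · intro p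
        have := p.1.2.1
        intro hc
        nlinarith [p.1.2.1]
      · exact (continuous_const.mul (continuous_subtype_val.comp continuous_fst)).div_const _
  map_zero_left w := by
    refine W112_ext f rfl rfl (fun u => ?_) ?_
    · show w.1.2.2.1.1 (eI (rho ((w.1.2.2.2:I):ℝ) ((0:I):ℝ) (u:ℝ))) = w.1.2.2.1.1 u
      rw [show ((0:I):ℝ) = 0 from rfl, rho_tau_zero u.2.1 u.2.2, eI_coe]
    · show eI (sMid ((w.1.2.2.2:I):ℝ) ((0:I):ℝ)) = w.1.2.2.2
      rw [show ((0:I):ℝ) = 0 from rfl, sMid_tau_zero, eI_coe]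
  map_one_left w := rfl

/-- Stage B homotopy on `W112`. -/
noncomputable def HWB (h₁ : C(M₁ × I, M₁)) (h₂ : C(M₂ × I, M₂)) (K : C(M₁ × I × I, M₂))
    (hh₁0 : ∀ m, h₁ (m, 0) = g (f m)) (hh₁1 : ∀ m, h₁ (m, 1) = m)
    (hh₂0 : ∀ m, h₂ (m, 0) = f (g m)) (hh₂1 : ∀ m, h₂ (m, 1) = m)
    (hK0 : ∀ m t, K (m, t, 0) = f (h₁ (m, t)))
    (hK1 : ∀ m t, K (m, t, 1) = h₂ (f m, t))
    (hKrel0 : ∀ m u u', K (m, 0, u) = K (m, 0, u'))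
    (hKrel1 : ∀ m u u', K (m, 1, u) = K (m, 1, u')) :
    (((Gmap f g).comp (fPrime2 f)).comp (RW f)).Homotopy (RW f) where
  toFun p := ⟨(h₁ (p.2.1.1, p.1), h₁ (p.2.1.2.1, p.1),
      loopB f h₁ h₂ K hK0 hK1 (dOfW f p.2) p.1, eI (sMid ((p.2.1.2.2.2 : I):ℝ) 1)),
    (Phi_zero h₁ h₂ K hK0 (dOfW f p.2) p.1).symm,
    by
      rw [sMid_one]
      exact (Phi_spike h₁ h₂ K hK0 (dOfW f p.2) p.1).symm⟩
  continuous_toFun := by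
    have hv : Continuous fun p : I × W112 f => (p.2 : M₁ × M₁ × LoopSp M₂ × I) :=
      continuous_subtype_val.comp continuous_snd
    apply Continuous.subtype_mk
    refine Continuous.prodMk ?_ (Continuous.prodMk ?_ (Continuous.prodMk ?_ ?_))
    · exact h₁.continuous.comp (hv.fst.prodMk continuous_fst)
    · exact h₁.continuous.comp (hv.snd.fst.prodMk continuous_fst)
    · exact Continuous.subtype_mk ((map_continuous (PhiC f h₂ K hK1).curry).comp
        ((((continuous_dOfW f).comp continuous_snd).prodMk continuous_fst))) _
    · exact continuous_eI.comp (((continuous_subtype_val.comp hv.snd.snd.snd).div_const _).add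
        continuous_const)
  map_zero_left w := by
    have hs0 : (0:ℝ) ≤ w.1.2.2.2 := w.1.2.2.2.2.1
    have hs1 : ((w.1.2.2.2:I):ℝ) ≤ 1 := w.1.2.2.2.2.2
    have hm := sMid_mem hs0 hs1 (zero_le_one (α := ℝ)) le_rfl
    refine W112_ext f (hh₁0 _) ?_ (fun u => ?_) rfl
    · show h₁ (w.1.2.1, 0) = g (w.1.2.2.1.1
        (eI (rho ((w.1.2.2.2:I):ℝ) ((1:I):ℝ) ((eI (sMid ((w.1.2.2.2:I):ℝ) 1) : I):ℝ))))
      rw [show ((1:I):ℝ) = 1 from rfl, eI_of_mem hm.1 hm.2,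
        rho_sMid hs0 hs1 zero_le_one le_rfl, eI_coe, hh₁0, w.2.2]
    · exact Phi_t_zero h₂ K hh₂0 hK1 hKrel0 (dOfW f w) u
  map_one_left w := by
    refine W112_ext f (hh₁1 _) (hh₁1 _) (fun u => ?_) rfl
    exact Phi_t_one h₂ K hh₂1 hK1 hKrel1 (dOfW f w) u

/-- `G ∘ f'₂` is homotopic to the identity. -/
lemma homotopic_W (h₁ : C(M₁ × I, M₁)) (h₂ : C(M₂ × I, M₂)) (K : C(M₁ × I × I, M₂))
    (hh₁0 : ∀ m, h₁ (m, 0) = g (f m)) (hh₁1 : ∀ m, h₁ (m, 1) = m)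
    (hh₂0 : ∀ m, h₂ (m, 0) = f (g m)) (hh₂1 : ∀ m, h₂ (m, 1) = m)
    (hK0 : ∀ m t, K (m, t, 0) = f (h₁ (m, t)))
    (hK1 : ∀ m t, K (m, t, 1) = h₂ (f m, t))
    (hKrel0 : ∀ m u u', K (m, 0, u) = K (m, 0, u'))
    (hKrel1 : ∀ m u u', K (m, 1, u) = K (m, 1, u')) :
    ((Gmap f g).comp (fPrime2 f)).Homotopic (ContinuousMap.id _) := by
  have hA : (ContinuousMap.id (W112 f)).Homotopic (RW f) := ⟨HWA f⟩
  have hB : ((((Gmap f g).comp (fPrime2 f)).comp (RW f))).Homotopic (RW f) :=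
    ⟨HWB f g h₁ h₂ K hh₁0 hh₁1 hh₂0 hh₂1 hK0 hK1 hKrel0 hKrel1⟩
  have h1 := (ContinuousMap.Homotopic.refl ((Gmap f g).comp (fPrime2 f))).comp hA
  rw [ContinuousMap.comp_id] at h1
  exact (h1.trans hB).trans hA.symm

/-- The end map of the reparametrisation homotopy on `Lam12 × I`. -/
noncomputable def RL : C(Lam12 f × I, Lam12 f × I) where
  toFun p := (⟨(p.1.1.1, loopA f (dOfL f p.1) 1),
    by
      show f p.1.1.1 = p.1.1.2.1 (eI (rho ((0:I):ℝ) ((1:I):ℝ) ((0:I):ℝ)))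
      rw [show ((0:I):ℝ) = 0 from rfl, show ((1:I):ℝ) = 1 from rfl,
        rho_zero le_rfl zero_le_one, eI_zero, ← p.1.2]⟩, p.2)
  continuous_toFun := by
    have hb : Continuous fun p : Lam12 f × I => (p.1 : M₁ × LoopSp M₂) :=
      continuous_subtype_val.comp continuous_fst
    refine Continuous.prodMk (Continuous.subtype_mk (hb.fst.prodMk ?_) _) continuous_snd
    exact (continuous_loopA f).comp (((continuous_dOfL f).comp continuous_fst).prodMk
      continuous_const)

/-- Stage A homotopy on `Lam12 × I`: from the identity to `RL`. -/
noncomputable def HLA : (ContinuousMap.id (Lam12 f × I)).Homotopy (RL f) where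
  toFun q := (⟨(q.2.1.1.1, loopA f (dOfL f q.2.1) q.1),
    by
      show f q.2.1.1.1 = q.2.1.1.2.1 (eI (rho ((0:I):ℝ) ((q.1:I):ℝ) ((0:I):ℝ)))
      rw [show ((0:I):ℝ) = 0 from rfl, rho_zero le_rfl q.1.2.1, eI_zero, ← q.2.1.2]⟩, q.2.2)
  continuous_toFun := by
    have hb : Continuous fun q : I × (Lam12 f × I) => (q.2.1 : M₁ × LoopSp M₂) :=
      continuous_subtype_val.comp (continuous_fst.comp continuous_snd)
    refine Continuous.prodMk (Continuous.subtype_mk (hb.fst.prodMk ?_) _)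
      (continuous_snd.comp continuous_snd)
    exact (continuous_loopA f).comp
      (((continuous_dOfL f).comp (continuous_fst.comp continuous_snd)).prodMk continuous_fst)
  map_zero_left p := by
    refine LamI_ext f rfl (fun u => ?_) rfl
    show p.1.1.2.1 (eI (rho ((0:I):ℝ) ((0:I):ℝ) (u:ℝ))) = p.1.1.2.1 u
    rw [show ((0:I):ℝ) = 0 from rfl, rho_tau_zero u.2.1 u.2.2, eI_coe]
  map_one_left p := rfl

/-- Stage B homotopy on `Lam12 × I`. -/
noncomputable def HLB (h₁ : C(M₁ × I, M₁)) (h₂ : C(M₂ × I, M₂)) (K : C(M₁ × I × I, M₂))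
    (hh₁0 : ∀ m, h₁ (m, 0) = g (f m)) (hh₁1 : ∀ m, h₁ (m, 1) = m)
    (hh₂0 : ∀ m, h₂ (m, 0) = f (g m)) (hh₂1 : ∀ m, h₂ (m, 1) = m)
    (hK0 : ∀ m t, K (m, t, 0) = f (h₁ (m, t)))
    (hK1 : ∀ m t, K (m, t, 1) = h₂ (f m, t))
    (hKrel0 : ∀ m u u', K (m, 0, u) = K (m, 0, u'))
    (hKrel1 : ∀ m u u', K (m, 1, u) = K (m, 1, u')) :
    (((fPrime2 f).comp (Gmap f g)).comp (RL f)).Homotopy (RL f) where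
  toFun q := (⟨(h₁ (q.2.1.1.1, q.1), loopB f h₁ h₂ K hK0 hK1 (dOfL f q.2.1) q.1),
    (Phi_zero h₁ h₂ K hK0 (dOfL f q.2.1) q.1).symm⟩, q.2.2)
  continuous_toFun := by
    have hb : Continuous fun q : I × (Lam12 f × I) => (q.2.1 : M₁ × LoopSp M₂) :=
      continuous_subtype_val.comp (continuous_fst.comp continuous_snd)
    refine Continuous.prodMk (Continuous.subtype_mk (Continuous.prodMk ?_ ?_) _)
      (continuous_snd.comp continuous_snd)
    · exact h₁.continuous.comp (hb.fst.prodMk continuous_fst)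
    · exact Continuous.subtype_mk ((map_continuous (PhiC f h₂ K hK1).curry).comp
        ((((continuous_dOfL f).comp (continuous_fst.comp continuous_snd)).prodMk
          continuous_fst))) _
  map_zero_left p := by
    refine LamI_ext f (hh₁0 _) (fun u => ?_) rfl
    exact Phi_t_zero h₂ K hh₂0 hK1 hKrel0 (dOfL f p.1) u
  map_one_left p := by
    refine LamI_ext f (hh₁1 _) (fun u => ?_) rfl
    exact Phi_t_one h₂ K hh₂1 hK1 hKrel1 (dOfL f p.1) u

/-- `f'₂ ∘ G` is homotopic to the identity. -/
lemma homotopic_L (h₁ : C(M₁ × I, M₁)) (h₂ : C(M₂ × I, M₂)) (K : C(M₁ × I × I, M₂))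
    (hh₁0 : ∀ m, h₁ (m, 0) = g (f m)) (hh₁1 : ∀ m, h₁ (m, 1) = m)
    (hh₂0 : ∀ m, h₂ (m, 0) = f (g m)) (hh₂1 : ∀ m, h₂ (m, 1) = m)
    (hK0 : ∀ m t, K (m, t, 0) = f (h₁ (m, t)))
    (hK1 : ∀ m t, K (m, t, 1) = h₂ (f m, t))
    (hKrel0 : ∀ m u u', K (m, 0, u) = K (m, 0, u'))
    (hKrel1 : ∀ m u u', K (m, 1, u) = K (m, 1, u')) :
    ((fPrime2 f).comp (Gmap f g)).Homotopic (ContinuousMap.id _) := by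
  have hA : (ContinuousMap.id (Lam12 f × I)).Homotopic (RL f) := ⟨HLA f⟩
  have hB : ((((fPrime2 f).comp (Gmap f g)).comp (RL f))).Homotopic (RL f) :=
    ⟨HLB f g h₁ h₂ K hh₁0 hh₁1 hh₂0 hh₂1 hK0 hK1 hKrel0 hKrel1⟩
  have h1 := (ContinuousMap.Homotopic.refl ((fPrime2 f).comp (Gmap f g))).comp hA
  rw [ContinuousMap.comp_id] at h1
  exact (h1.trans hB).trans hA.symm


end Maps

end MainDefs

/- ===== main ===== -/
theorem explicit_homotopy_inverse_of_fPrime2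
    (f : C(M₁, M₂)) (g : C(M₂, M₁))
    (h₁ : C(M₁ × unitInterval, M₁))
    (hh₁0 : ∀ m, h₁ (m, 0) = g (f m)) (hh₁1 : ∀ m, h₁ (m, 1) = m)
    (h₂ : C(M₂ × unitInterval, M₂))
    (hh₂0 : ∀ m, h₂ (m, 0) = f (g m)) (hh₂1 : ∀ m, h₂ (m, 1) = m)
    (K : C(M₁ × unitInterval × unitInterval, M₂))
    (hK0 : ∀ m t, K (m, t, 0) = f (h₁ (m, t)))
    (hK1 : ∀ m t, K (m, t, 1) = h₂ (f m, t))
    (hKrel0 : ∀ m u u', K (m, 0, u) = K (m, 0, u'))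
    (hKrel1 : ∀ m u u', K (m, 1, u) = K (m, 1, u')) :
    ∃ G : C(Lam12 f × unitInterval, W112 f),
      (∀ p : Lam12 f × unitInterval,
        ((G p : W112 f) : M₁ × M₁ × LoopSp M₂ × unitInterval) =
          (g (f p.1.1.1), g (p.1.1.2.1 p.2), fgLoop f g p.1.1.2, p.2)) ∧
      ((fPrime2 f).comp G).Homotopic (ContinuousMap.id _) ∧
      (G.comp (fPrime2 f)).Homotopic (ContinuousMap.id _) := by
  exact ⟨Gmap f g, fun p => rfl,
    homotopic_L f g h₁ h₂ K hh₁0 hh₁1 hh₂0 hh₂1 hK0 hK1 hKrel0 hKrel1,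
    homotopic_W f g h₁ h₂ K hh₁0 hh₁1 hh₂0 hh₂1 hK0 hK1 hKrel0 hKrel1⟩
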